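/- For all real numbers s > 0, t > 0 and every real number α, the series ∑_{k=0}^∞ (exp(−s) · s^k / k!)^α · (exp(−t) · t^k / k!)^{1−α} converges and equals exp(s^α · t^{1−α} − α·s − (1−α)·t). Consequently, for α ∉ {0,1}, (α−1)⁻¹ · log( ∑_{k=0}^∞ (exp(−s) s^k/k!)^α (exp(−t) t^k/k!)^{1−α} ) = (α·s + (1−α)·t − s^α·t^{1−α}) / (1−α). -/

import Mathlib

/-- Rényi divergence of order `α` between two Poisson distributions with means `s, t > 0`:
the series `∑ₖ (e^{-s} sᵏ/k!)^α (e^{-t} tᵏ/k!)^{1-α}` converges to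
`exp(s^α t^{1-α} - αs - (1-α)t)`, and consequently for `α ∉ {0,1}` the Rényi divergence equals
`(αs + (1-α)t - s^α t^{1-α})/(1-α)`. -/
theorem poisson_renyi (s t α : ℝ) (hs : 0 < s) (ht : 0 < t) :
    HasSum (fun k : ℕ =>
      (Real.exp (-s) * s ^ k / (Nat.factorial k : ℝ)) ^ α *
        (Real.exp (-t) * t ^ k / (Nat.factorial k : ℝ)) ^ (1 - α))
      (Real.exp (s ^ α * t ^ (1 - α) - α * s - (1 - α) * t)) ∧
    (α ≠ 0 → α ≠ 1 →
      (α - 1)⁻¹ * Real.log (∑' k : ℕ,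
        (Real.exp (-s) * s ^ k / (Nat.factorial k : ℝ)) ^ α *
          (Real.exp (-t) * t ^ k / (Nat.factorial k : ℝ)) ^ (1 - α))
      = (α * s + (1 - α) * t - s ^ α * t ^ (1 - α)) / (1 - α)) := by
  set x : ℝ := s ^ α * t ^ (1 - α) with hxdef
  have key : ∀ k : ℕ,
      (Real.exp (-s) * s ^ k / (Nat.factorial k : ℝ)) ^ α *
        (Real.exp (-t) * t ^ k / (Nat.factorial k : ℝ)) ^ (1 - α)
      = Real.exp (-(α * s) - (1 - α) * t) * (x ^ k / (Nat.factorial k : ℝ)) := by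
    intro k
    have hk : (0:ℝ) < (Nat.factorial k : ℝ) := by positivity
    rw [Real.div_rpow (by positivity) hk.le, Real.div_rpow (by positivity) hk.le,
        Real.mul_rpow (Real.exp_pos _).le (by positivity),
        Real.mul_rpow (Real.exp_pos _).le (by positivity),
        ← Real.exp_mul, ← Real.exp_mul,
        ← Real.rpow_natCast s k, ← Real.rpow_natCast t k,
        ← Real.rpow_mul hs.le, ← Real.rpow_mul ht.le, hxdef,
        mul_pow, ← Real.rpow_natCast (s ^ α) k, ← Real.rpow_natCast (t ^ (1 - α)) k,
        ← Real.rpow_mul hs.le, ← Real.rpow_mul ht.le]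
    rw [div_mul_div_comm, ← Real.rpow_add hk]
    ring_nf
    rw [Real.rpow_one]
    ring_nf
    rw [show -(s * α) + α * t - t = -(s * α) + (α * t - t) by ring, Real.exp_add]
    ring
  have hsum : HasSum (fun k : ℕ =>
      (Real.exp (-s) * s ^ k / (Nat.factorial k : ℝ)) ^ α *
        (Real.exp (-t) * t ^ k / (Nat.factorial k : ℝ)) ^ (1 - α))
      (Real.exp (x - α * s - (1 - α) * t)) := by
    have h := (NormedSpace.expSeries_div_hasSum_exp x).mul_left
      (Real.exp (-(α * s) - (1 - α) * t))
    rw [← Real.exp_eq_exp_ℝ, ← Real.exp_add] at h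
    convert h using 2 with k
    · rfl
    · exact key k
    · ring
  refine ⟨hsum, fun h0 h1 => ?_⟩
  rw [hsum.tsum_eq, Real.log_exp]
  have h1' : α - 1 ≠ 0 := sub_ne_zero.mpr h1
  have h1'' : (1:ℝ) - α ≠ 0 := sub_ne_zero.mpr (Ne.symm h1)
  field_simp
  ring
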